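/- Suppose f : ℝ → ℝ satisfies |f(t)| ≤ ν·|t| for |t| < κ with 0 < ν < μ₀, and |f(t)| ≤ C·|t| for all t. Let (u_n), (w_n⁺), (w_n⁻), (w_n) be measurable functions on ℝᴺ with w_n = w_n⁺ + w_n⁻, ‖w_n‖_{L²} ≤ 1/√μ₀, |u_n| ≤ b, and ∫_{κ ≤ |u_n| ≤ b} w_n² dx → 0. Then limsup_n ∫_{ℝᴺ} |f(u_n)/u_n|·|w_n⁺ − w_n⁻|·|w_n| dx ≤ ν/μ₀ < 1, where the integrand is taken 0 where u_n = 0 and ‖w_n⁺ − w_n⁻‖_{L²} = ‖w_n‖_{L²}. -/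

import Mathlib

open MeasureTheory Filter Topology

-- Cauchy–Schwarz for integrals
lemma cs_int {α : Type*} [MeasurableSpace α] {μ : Measure α} {f g : α → ℝ}
    (hfm : AEStronglyMeasurable f μ) (hgm : AEStronglyMeasurable g μ)
    (hf2 : Integrable (fun x => f x ^ 2) μ) (hg2 : Integrable (fun x => g x ^ 2) μ) :
    ∫ x, |f x| * |g x| ∂μ ≤ Real.sqrt (∫ x, f x ^ 2 ∂μ) * Real.sqrt (∫ x, g x ^ 2 ∂μ) := by
  have h2 : (ENNReal.ofReal 2) = 2 := by norm_num
  have hmf : MemLp (fun x => |f x|) (ENNReal.ofReal 2) μ := by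
    rw [h2, memLp_two_iff_integrable_sq (continuous_abs.comp_aestronglyMeasurable hfm)]
    simpa [sq_abs] using hf2
  have hmg : MemLp (fun x => |g x|) (ENNReal.ofReal 2) μ := by
    rw [h2, memLp_two_iff_integrable_sq (continuous_abs.comp_aestronglyMeasurable hgm)]
    simpa [sq_abs] using hg2
  have hpq : Real.HolderConjugate 2 2 := Real.holderConjugate_iff.mpr ⟨one_lt_two, by norm_num⟩
  have := integral_mul_le_Lp_mul_Lq_of_nonneg (μ := μ) hpq
    (Filter.Eventually.of_forall (fun x => abs_nonneg (f x)))
    (Filter.Eventually.of_forall (fun x => abs_nonneg (g x))) hmf hmg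
  have e1 : ∫ x, |f x| ^ (2:ℝ) ∂μ = ∫ x, f x ^ 2 ∂μ := by
    refine integral_congr_ae (Filter.Eventually.of_forall (fun x => ?_))
    show |f x| ^ (2:ℝ) = f x ^ 2
    rw [Real.rpow_two, sq_abs]
  have e2 : ∫ x, |g x| ^ (2:ℝ) ∂μ = ∫ x, g x ^ 2 ∂μ := by
    refine integral_congr_ae (Filter.Eventually.of_forall (fun x => ?_))
    show |g x| ^ (2:ℝ) = g x ^ 2
    rw [Real.rpow_two, sq_abs]
  rw [e1, e2] at this
  calc ∫ x, |f x| * |g x| ∂μ ≤ (∫ x, f x ^ 2 ∂μ) ^ (1/(2:ℝ)) * (∫ x, g x ^ 2 ∂μ) ^ (1/(2:ℝ)) := this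
    _ = Real.sqrt (∫ x, f x ^ 2 ∂μ) * Real.sqrt (∫ x, g x ^ 2 ∂μ) := by
        rw [← Real.sqrt_eq_rpow, ← Real.sqrt_eq_rpow]

theorem stmt12 (N : ℕ) (ν μ₀ κ C b : ℝ)
    (hν : 0 < ν) (hνμ : ν < μ₀) (hκ : 0 < κ) (hC : 0 < C) (hb : κ ≤ b)
    (f : ℝ → ℝ)
    (hfsmall : ∀ t : ℝ, |t| < κ → |f t| ≤ ν * |t|)
    (hflin : ∀ t : ℝ, |f t| ≤ C * |t|)
    (u w wp wm : ℕ → (Fin N → ℝ) → ℝ)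
    (humeas : ∀ n, Measurable (u n)) (hwmeas : ∀ n, Measurable (w n))
    (hwpmeas : ∀ n, Measurable (wp n)) (hwmmeas : ∀ n, Measurable (wm n))
    (hw2int : ∀ n, Integrable (fun x => (w n x) ^ 2))
    (hdiff2int : ∀ n, Integrable (fun x => (wp n x - wm n x) ^ 2))
    (hsum : ∀ n, ∀ x, w n x = wp n x + wm n x)
    (hwL2 : ∀ n, ∫ x, (w n x) ^ 2 ≤ 1 / μ₀)
    (hdiffL2 : ∀ n, ∫ x, (wp n x - wm n x) ^ 2 = ∫ x, (w n x) ^ 2)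
    (hub : ∀ n, ∀ x, |u n x| ≤ b)
    (hshrink : Tendsto
      (fun n => ∫ x in {x | κ ≤ |u n x| ∧ |u n x| ≤ b}, (w n x) ^ 2) atTop (𝓝 0)) :
    Filter.limsup (fun n => ∫ x,
        (if u n x = 0 then 0 else |f (u n x) / u n x| * |wp n x - wm n x| * |w n x|))
      atTop ≤ ν / μ₀ ∧ ν / μ₀ < 1 := by
  have hμ0 : 0 < μ₀ := hν.trans hνμ
  set I : ℕ → ℝ := fun n => ∫ x,
      (if u n x = 0 then 0 else |f (u n x) / u n x| * |wp n x - wm n x| * |w n x|) with hI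
  set ε : ℕ → ℝ := fun n => ∫ x in {x | κ ≤ |u n x| ∧ |u n x| ≤ b}, (w n x) ^ 2 with hε
  set B : ℕ → ℝ := fun n => ν / μ₀ + (C * Real.sqrt (1 / μ₀)) * Real.sqrt (ε n) with hB
  have hdm : ∀ n, Measurable (fun x => wp n x - wm n x) :=
    fun n => (hwpmeas n).sub (hwmmeas n)
  have hSm : ∀ n, MeasurableSet {x | κ ≤ |u n x| ∧ |u n x| ≤ b} := fun n =>
    (measurableSet_le measurable_const (humeas n).abs).inter
      (measurableSet_le (humeas n).abs measurable_const)
  -- key bound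
  have key : ∀ n, I n ≤ B n := by
    intro n
    set d : (Fin N → ℝ) → ℝ := fun x => wp n x - wm n x with hd
    set S : Set (Fin N → ℝ) := {x | κ ≤ |u n x| ∧ |u n x| ≤ b} with hS
    set g2 : (Fin N → ℝ) → ℝ := S.indicator (w n) with hg2
    have hg2m : Measurable g2 := (hwmeas n).indicator (hSm n)
    have hg2sq : (fun x => g2 x ^ 2) = S.indicator (fun x => w n x ^ 2) := by
      funext x
      by_cases hx : x ∈ S <;> simp [hg2, Set.indicator_apply, hx]
    have hg2int : Integrable (fun x => g2 x ^ 2) := by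
      rw [hg2sq]; exact (hw2int n).indicator (hSm n)
    have hg2L2 : ∫ x, g2 x ^ 2 = ε n := by
      rw [hg2sq, integral_indicator (hSm n)]
    -- integrability of |d| * |w|
    have hdw_int : Integrable (fun x => |d x| * |w n x|) := by
      refine Integrable.mono' ((hdiff2int n).add (hw2int n))
        (((hdm n).abs.mul (hwmeas n).abs).aestronglyMeasurable)
        (Filter.Eventually.of_forall (fun x => ?_))
      have h1 : |d x| * |w n x| ≤ d x ^ 2 + w n x ^ 2 := by
        nlinarith [abs_nonneg (d x), abs_nonneg (w n x), sq_abs (d x), sq_abs (w n x),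
          sq_nonneg (|d x| - |w n x|)]
      rw [Real.norm_eq_abs, abs_of_nonneg (mul_nonneg (abs_nonneg _) (abs_nonneg _))]
      exact h1
    have hdg2_int : Integrable (fun x => |d x| * |g2 x|) := by
      refine Integrable.mono' hdw_int
        (((hdm n).abs.mul hg2m.abs).aestronglyMeasurable)
        (Filter.Eventually.of_forall (fun x => ?_))
      rw [Real.norm_eq_abs, abs_of_nonneg (mul_nonneg (abs_nonneg _) (abs_nonneg _))]
      refine mul_le_mul_of_nonneg_left ?_ (abs_nonneg _)
      by_cases hx : x ∈ S <;> simp [hg2, Set.indicator_apply, hx, abs_nonneg]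
    -- Cauchy–Schwarz bounds
    have hw2nonneg : (0:ℝ) ≤ ∫ x, w n x ^ 2 := integral_nonneg (fun x => sq_nonneg _)
    have B1 : ∫ x, |d x| * |w n x| ≤ 1 / μ₀ := by
      have := cs_int ((hdm n).aestronglyMeasurable) ((hwmeas n).aestronglyMeasurable)
        (hdiff2int n) (hw2int n)
      rw [hdiffL2 n, Real.mul_self_sqrt hw2nonneg] at this
      exact this.trans (hwL2 n)
    have B2 : ∫ x, |d x| * |g2 x| ≤ Real.sqrt (1 / μ₀) * Real.sqrt (ε n) := by
      have := cs_int ((hdm n).aestronglyMeasurable) (hg2m.aestronglyMeasurable)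
        (hdiff2int n) hg2int
      rw [hdiffL2 n, hg2L2] at this
      refine this.trans (mul_le_mul_of_nonneg_right ?_ (Real.sqrt_nonneg _))
      exact Real.sqrt_le_sqrt (hwL2 n)
    -- pointwise bound
    have hpt : ∀ x, (if u n x = 0 then 0 else |f (u n x) / u n x| * |d x| * |w n x|)
        ≤ ν * (|d x| * |w n x|) + C * (|d x| * |g2 x|) := by
      intro x
      by_cases hu : u n x = 0
      · simp only [hu, if_pos rfl]
        positivity
      · rw [if_neg hu]
        have hupos : 0 < |u n x| := abs_pos.mpr hu
        rw [abs_div]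
        by_cases hcase : |u n x| < κ
        · have hq : |f (u n x)| / |u n x| ≤ ν := by
            rw [div_le_iff₀ hupos]
            exact hfsmall _ hcase
          have : |f (u n x)| / |u n x| * |d x| * |w n x| ≤ ν * (|d x| * |w n x|) := by
            rw [mul_assoc]
            exact mul_le_mul_of_nonneg_right hq (mul_nonneg (abs_nonneg _) (abs_nonneg _))
          refine this.trans ?_
          have : 0 ≤ C * (|d x| * |g2 x|) := by positivity
          linarith
        · push_neg at hcase
          have hxS : x ∈ S := ⟨hcase, hub n x⟩
          have hg2x : g2 x = w n x := Set.indicator_of_mem hxS _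
          have hq : |f (u n x)| / |u n x| ≤ C := by
            rw [div_le_iff₀ hupos]
            exact hflin _
          have h1 : |f (u n x)| / |u n x| * |d x| * |w n x| ≤ C * (|d x| * |g2 x|) := by
            rw [hg2x, mul_assoc]
            exact mul_le_mul_of_nonneg_right hq (mul_nonneg (abs_nonneg _) (abs_nonneg _))
          have h2 : 0 ≤ ν * (|d x| * |w n x|) := by positivity
          linarith
    -- combine
    have hIle : I n ≤ ∫ x, (ν * (|d x| * |w n x|) + C * (|d x| * |g2 x|)) := by
      refine integral_mono_of_nonneg (Filter.Eventually.of_forall (fun x => ?_))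
        ((hdw_int.const_mul ν).add (hdg2_int.const_mul C))
        (Filter.Eventually.of_forall hpt)
      simp only [Pi.zero_apply]
      split <;> positivity
    rw [integral_add (hdw_int.const_mul ν) (hdg2_int.const_mul C),
      integral_const_mul, integral_const_mul] at hIle
    refine hIle.trans ?_
    rw [hB]
    have t1 : ν * ∫ x, |d x| * |w n x| ≤ ν / μ₀ := by
      calc ν * ∫ x, |d x| * |w n x| ≤ ν * (1 / μ₀) := mul_le_mul_of_nonneg_left B1 hν.le
        _ = ν / μ₀ := by ring
    have t2 : C * ∫ x, |d x| * |g2 x| ≤ C * Real.sqrt (1 / μ₀) * Real.sqrt (ε n) := by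
      calc C * ∫ x, |d x| * |g2 x| ≤ C * (Real.sqrt (1 / μ₀) * Real.sqrt (ε n)) :=
            mul_le_mul_of_nonneg_left B2 hC.le
        _ = C * Real.sqrt (1 / μ₀) * Real.sqrt (ε n) := by ring
    dsimp only
    linarith
  -- limsup argument
  have hInonneg : ∀ n, (0:ℝ) ≤ I n := by
    intro n
    refine integral_nonneg (fun x => ?_)
    dsimp only
    split <;> positivity
  have hBtendsto : Tendsto B atTop (𝓝 (ν / μ₀)) := by
    have hsq : Tendsto (fun n => Real.sqrt (ε n)) atTop (𝓝 0) := by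
      have := (Real.continuous_sqrt.tendsto' 0 0 Real.sqrt_zero).comp hshrink
      exact this
    have h2 : Tendsto (fun n => C * Real.sqrt (1 / μ₀) * Real.sqrt (ε n)) atTop
        (𝓝 (C * Real.sqrt (1 / μ₀) * 0)) := hsq.const_mul _
    have h3 : Tendsto (fun n => ν / μ₀ + C * Real.sqrt (1 / μ₀) * Real.sqrt (ε n)) atTop
        (𝓝 (ν / μ₀ + C * Real.sqrt (1 / μ₀) * 0)) :=
      (tendsto_const_nhds (x := ν / μ₀)).add h2
    simpa only [mul_zero, add_zero] using h3
  constructor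
  · have h1 : Filter.limsup I atTop ≤ Filter.limsup B atTop := by
      refine Filter.limsup_le_limsup (Filter.Eventually.of_forall key) ?_ ?_
      · exact isCoboundedUnder_le_of_le atTop hInonneg
      · exact hBtendsto.isBoundedUnder_le
    rwa [hBtendsto.limsup_eq] at h1
  · exact (div_lt_one hμ0).2 hνμ
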